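/- The stationary and non-stationary infinite-horizon distributionally robust MDPs have the same optimal value: sup_{π∈Π^HR} inf_{P∈Ḡ_S} E_P[u(π, p̃, r̃, s_1)] = sup_{π∈Π^HR} inf_{P∈Ḡ_S^∞} E_P[u(π, p̃, r̃, s_1)], and this common value is attained by any S-robust strategy in both models. -/

import Mathlib

open MeasureTheory Finset ENNReal

noncomputable section

/-- The per-state parameter space: a transition row `p̃(·|s,·) : A → S → ℝ`, a reward row
`r̃(s,·) : A → ℝ`, and the auxiliary scenario index `ñ ∈ ℕ`. -/
abbrev MDPParam (S A : Type) : Type := (A → S → ℝ) × (A → ℝ) × ℕ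

variable {S A : Type} [Fintype S] [Fintype A]

/-- `{L_P^{π_s} v}(s)` : the expected one-step robust Bellman payoff under distribution `P`. -/
def bellmanLP (γ : ℝ) (P : ProbabilityMeasure (MDPParam S A)) (πs : A → ℝ) (v : S → ℝ) : ℝ :=
  ∫ ω, (∑ a, πs a * (ω.2.1 a + γ * ∑ s', ω.1 a s' * v s')) ∂(P : Measure (MDPParam S A))

/-- `inf_{P ∈ G_s} {L_P^{π_s} v}(s)`. -/
def robInf (γ : ℝ) (G : S → Set (ProbabilityMeasure (MDPParam S A)))
    (s : S) (πs : A → ℝ) (v : S → ℝ) : ℝ :=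
  ⨅ P : G s, bellmanLP γ (P : ProbabilityMeasure (MDPParam S A)) πs v

/-- The robust Bellman operator `L`:
`{Lv}(s) = max_{π_s ∈ Δ(A_s)} inf_{P ∈ G_s} {L_P^{π_s} v}(s)`. -/
def bellmanL (γ : ℝ) (G : S → Set (ProbabilityMeasure (MDPParam S A))) (v : S → ℝ) : S → ℝ :=
  fun s => ⨆ πs : stdSimplex ℝ A, robInf γ G s (πs : A → ℝ) v

/-- Standing assumptions on the state-wise ambiguity sets `G_s`: nonempty, convex
(closed under mixtures), weakly compact, and all members supported on a common compact
set on which each transition row is a probability vector on `S` and all rewards lie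
in `[0, rmax]`. -/
def IsGoodAmbiguity (rmax : ℝ) (G : S → Set (ProbabilityMeasure (MDPParam S A))) : Prop :=
  ∀ s : S, (G s).Nonempty ∧
    (∀ P ∈ G s, ∀ Q ∈ G s, ∀ θ : ℝ≥0∞, θ ≤ 1 →
      ∀ R : ProbabilityMeasure (MDPParam S A),
        (R : Measure (MDPParam S A)) =
          θ • (P : Measure (MDPParam S A)) + (1 - θ) • (Q : Measure (MDPParam S A)) →
        R ∈ G s) ∧
    IsCompact (G s) ∧
    ∃ K : Set (MDPParam S A), IsCompact K ∧
      (∀ ω ∈ K, (∀ a, (∀ s', 0 ≤ ω.1 a s') ∧ ∑ s', ω.1 a s' = 1) ∧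
        ∀ a, ω.2.1 a ∈ Set.Icc (0 : ℝ) rmax) ∧
      (∀ P ∈ G s, (P : Measure (MDPParam S A)) K = 1)

/-- History-dependent randomized policies: to each history (a list of visited
state–action pairs) and current state, assign a probability distribution on actions. -/
def IsHRPolicy (π : List (S × A) → S → A → ℝ) : Prop :=
  ∀ (h : List (S × A)) (s : S), π h s ∈ stdSimplex ℝ A

/-- Expected (undiscounted) reward collected exactly `k` steps in the future when the
current history is `h` (whose length is the current time) and the current state is `s`,
under a history-dependent policy `π` and (possibly time-varying) parameters `(p, r)`. -/
def expReward (π : List (S × A) → S → A → ℝ)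
    (p : ℕ → S → A → S → ℝ) (r : ℕ → S → A → ℝ) :
    ℕ → List (S × A) → S → ℝ
  | 0, h, s => ∑ a, π h s a * r h.length s a
  | k + 1, h, s =>
      ∑ a, π h s a * ∑ s', p h.length s a s' * expReward π p r k (h ++ [(s, a)]) s'

/-- The expected discounted total reward `u(π, p, r, s₁) = E_{Q(π)}[Σ_t γ^{t−1} r_t(s_t,a_t)]`. -/
def uDisc (γ : ℝ) (π : List (S × A) → S → A → ℝ)
    (p : ℕ → S → A → S → ℝ) (r : ℕ → S → A → ℝ) (s₁ : S) : ℝ :=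
  ∑' k : ℕ, γ ^ k * expReward π p r k [] s₁

/-- `E_P[reward collected k steps ahead]` when the uncertain parameters are governed by the
product measure `P = ⊗_{s,t} P_{s,t}`: by s- and t-rectangularity (parameters at distinct
state–time pairs are independent, and a length-`k` trajectory meets pairwise distinct
state–time pairs), the expectation of `expReward` factorizes into this nested form. -/
def expRewardAmb (π : List (S × A) → S → A → ℝ)
    (Ps : S → ℕ → ProbabilityMeasure (MDPParam S A)) :
    ℕ → List (S × A) → S → ℝ
  | 0, h, s =>
      ∫ ω, (∑ a, π h s a * ω.2.1 a) ∂((Ps s h.length : Measure (MDPParam S A)))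
  | k + 1, h, s =>
      ∫ ω, (∑ a, π h s a * ∑ s', ω.1 a s' * expRewardAmb π Ps k (h ++ [(s, a)]) s')
        ∂((Ps s h.length : Measure (MDPParam S A)))

/-- `w(π, P, s₁) = E_P[u(π, p̃, r̃, s₁)]` for the product measure `P = ⊗_{s,t} P_{s,t}`. -/
def wDisc (γ : ℝ) (π : List (S × A) → S → A → ℝ)
    (Ps : S → ℕ → ProbabilityMeasure (MDPParam S A)) (s₁ : S) : ℝ :=
  ∑' k : ℕ, γ ^ k * expRewardAmb π Ps k [] s₁

/-- An S-robust (stationary) strategy: at each state `s`, `πstar s` is a randomized action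
maximizing `inf_{P ∈ G_s} {L_P^{π_s} v*_∞}(s)`, where `v*_∞` is the fixed point of `L`. -/
def IsSRobustStationary (γ : ℝ) (G : S → Set (ProbabilityMeasure (MDPParam S A)))
    (vinf : S → ℝ) (πstar : S → A → ℝ) : Prop :=
  bellmanL γ G vinf = vinf ∧
    ∀ s, πstar s ∈ stdSimplex ℝ A ∧ robInf γ G s (πstar s) vinf = bellmanL γ G vinf s


/-! ### Auxiliary development -/

set_option linter.unusedSectionVars false

section Aux
variable {S A : Type} [Fintype S] [Fintype A]

/-- Pointwise goodness of parameters. -/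
def GoodParam (rmax : ℝ) (ω : MDPParam S A) : Prop :=
  (∀ a, (∀ s', 0 ≤ ω.1 a s') ∧ ∑ s', ω.1 a s' = 1) ∧
    ∀ a, ω.2.1 a ∈ Set.Icc (0 : ℝ) rmax

lemma ae_good {rmax : ℝ} {G : S → Set (ProbabilityMeasure (MDPParam S A))}
    (hG : IsGoodAmbiguity rmax G) {s : S} {P : ProbabilityMeasure (MDPParam S A)}
    (hP : P ∈ G s) : ∀ᵐ ω ∂(P : Measure (MDPParam S A)), GoodParam rmax ω := by
  obtain ⟨-, -, -, K, hKc, hKgood, hKfull⟩ := hG s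
  have hKm : MeasurableSet K := hKc.isClosed.measurableSet
  have h0 : (P : Measure (MDPParam S A)) Kᶜ = 0 := by
    rw [measure_compl hKm (measure_ne_top _ _), hKfull P hP, measure_univ, tsub_self]
  have hae : ∀ᵐ ω ∂(P : Measure (MDPParam S A)), ω ∈ K := by
    rw [MeasureTheory.ae_iff]; exact h0
  filter_upwards [hae] with ω hω
  exact ⟨(hKgood ω hω).1, (hKgood ω hω).2⟩

/-- Reward part of the one-step integrand. -/
def frew (πs : A → ℝ) (ω : MDPParam S A) : ℝ := ∑ a, πs a * ω.2.1 a

/-- Transition part of the one-step integrand. -/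
def ftr (πs : A → ℝ) (c : A → S → ℝ) (ω : MDPParam S A) : ℝ :=
  ∑ a, πs a * ∑ s', ω.1 a s' * c a s'

lemma measurable_frew (πs : A → ℝ) : Measurable (frew (S := S) πs) := by
  unfold frew; fun_prop

lemma measurable_ftr (πs : A → ℝ) (c : A → S → ℝ) : Measurable (ftr πs c) := by
  unfold ftr; fun_prop

lemma combo_mem {ι : Type*} [Fintype ι] {w x : ι → ℝ} (hw : ∀ i, 0 ≤ w i)
    (hw1 : ∑ i, w i = 1) {lo hi : ℝ} (hx : ∀ i, x i ∈ Set.Icc lo hi) :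
    ∑ i, w i * x i ∈ Set.Icc lo hi := by
  constructor
  · calc lo = ∑ i, w i * lo := by rw [← Finset.sum_mul, hw1, one_mul]
      _ ≤ ∑ i, w i * x i :=
        Finset.sum_le_sum fun i _ => mul_le_mul_of_nonneg_left (hx i).1 (hw i)
  · calc ∑ i, w i * x i ≤ ∑ i, w i * hi :=
        Finset.sum_le_sum fun i _ => mul_le_mul_of_nonneg_left (hx i).2 (hw i)
      _ = hi := by rw [← Finset.sum_mul, hw1, one_mul]

lemma combo_le {ι : Type*} [Fintype ι] {w x y : ι → ℝ} (hw : ∀ i, 0 ≤ w i)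
    (hxy : ∀ i, x i ≤ y i) : ∑ i, w i * x i ≤ ∑ i, w i * y i :=
  Finset.sum_le_sum fun i _ => mul_le_mul_of_nonneg_left (hxy i) (hw i)

lemma frew_mem {πs : A → ℝ} (hπ : πs ∈ stdSimplex ℝ A) {rmax : ℝ} {ω : MDPParam S A}
    (hω : GoodParam rmax ω) : frew πs ω ∈ Set.Icc 0 rmax :=
  combo_mem hπ.1 hπ.2 fun a => hω.2 a

lemma ftr_mem {πs : A → ℝ} (hπ : πs ∈ stdSimplex ℝ A) {c : A → S → ℝ} {lo hi : ℝ}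
    (hc : ∀ a s', c a s' ∈ Set.Icc lo hi) {rmax : ℝ} {ω : MDPParam S A}
    (hω : GoodParam rmax ω) : ftr πs c ω ∈ Set.Icc lo hi :=
  combo_mem hπ.1 hπ.2 fun a => combo_mem (hω.1 a).1 (hω.1 a).2 fun s' => hc a s'

lemma ftr_le {πs : A → ℝ} (hπ : πs ∈ stdSimplex ℝ A) {c c' : A → S → ℝ}
    (hc : ∀ a s', c a s' ≤ c' a s') {rmax : ℝ} {ω : MDPParam S A}
    (hω : GoodParam rmax ω) : ftr πs c ω ≤ ftr πs c' ω :=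
  combo_le hπ.1 fun a => combo_le (hω.1 a).1 fun s' => hc a s'

/-- Generic: measurable a.e.-bounded function on a probability space is integrable with
integral in the same bounds. -/
lemma integral_bddI {X : Type*} [MeasurableSpace X] (P : Measure X) [IsProbabilityMeasure P]
    {f : X → ℝ} (hf : Measurable f) {lo hi : ℝ}
    (h : ∀ᵐ ω ∂P, f ω ∈ Set.Icc lo hi) :
    Integrable f P ∧ ∫ ω, f ω ∂P ∈ Set.Icc lo hi := by
  have hint : Integrable f P := by
    refine (integrable_const (max |lo| |hi|)).mono' hf.aestronglyMeasurable ?_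
    filter_upwards [h] with ω hω
    rw [Real.norm_eq_abs, abs_le]
    constructor
    · exact le_trans (neg_le_neg (le_max_left _ _)) (neg_abs_le lo |>.trans hω.1)
    · exact hω.2.trans ((le_abs_self hi).trans (le_max_right _ _))
  refine ⟨hint, ?_, ?_⟩
  · calc lo = ∫ _, lo ∂P := by simp
      _ ≤ ∫ ω, f ω ∂P :=
        integral_mono_ae (integrable_const _) hint (h.mono fun ω hω => hω.1)
  · calc ∫ ω, f ω ∂P ≤ ∫ _, hi ∂P :=
        integral_mono_ae hint (integrable_const _) (h.mono fun ω hω => hω.2)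
      _ = hi := by simp

end Aux

section Aux2
set_option linter.unusedSectionVars false
variable {S A : Type} [Fintype S] [Fintype A]
variable {γ rmax : ℝ} {G : S → Set (ProbabilityMeasure (MDPParam S A))}
variable {π : List (S × A) → S → A → ℝ} {Ps : S → ℕ → ProbabilityMeasure (MDPParam S A)}

lemma expRewardAmb_zero (h : List (S × A)) (s : S) :
    expRewardAmb π Ps 0 h s
      = ∫ ω, frew (π h s) ω ∂((Ps s h.length : Measure (MDPParam S A))) := rfl

lemma expRewardAmb_succ (k : ℕ) (h : List (S × A)) (s : S) :
    expRewardAmb π Ps (k + 1) h s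
      = ∫ ω, ftr (π h s) (fun a s' => expRewardAmb π Ps k (h ++ [(s, a)]) s') ω
          ∂((Ps s h.length : Measure (MDPParam S A))) := rfl

lemma expRewardAmb_mem (hG : IsGoodAmbiguity rmax G)
    (hπ : ∀ h s, π h s ∈ stdSimplex ℝ A) (hPs : ∀ s t, Ps s t ∈ G s) :
    ∀ (k : ℕ) (h : List (S × A)) (s : S), expRewardAmb π Ps k h s ∈ Set.Icc 0 rmax := by
  intro k
  induction k with
  | zero =>
      intro h s
      rw [expRewardAmb_zero]
      exact (integral_bddI _ (measurable_frew _)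
        ((ae_good hG (hPs s h.length)).mono fun ω hω => frew_mem (hπ h s) hω)).2
  | succ k ih =>
      intro h s
      rw [expRewardAmb_succ]
      exact (integral_bddI _ (measurable_ftr _ _)
        ((ae_good hG (hPs s h.length)).mono fun ω hω =>
          ftr_mem (hπ h s) (fun a s' => ih _ _) hω)).2

lemma summable_wterm (hγ0 : 0 ≤ γ) (hγ1 : γ < 1) (hG : IsGoodAmbiguity rmax G)
    (hπ : ∀ h s, π h s ∈ stdSimplex ℝ A) (hPs : ∀ s t, Ps s t ∈ G s) (s₁ : S) :
    Summable (fun k => γ ^ k * expRewardAmb π Ps k [] s₁) := by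
  refine Summable.of_nonneg_of_le
    (fun k => mul_nonneg (pow_nonneg hγ0 _) (expRewardAmb_mem hG hπ hPs k [] s₁).1)
    (fun k => ?_) ((summable_geometric_of_lt_one hγ0 hγ1).mul_right rmax)
  exact mul_le_mul_of_nonneg_left (expRewardAmb_mem hG hπ hPs k [] s₁).2 (pow_nonneg hγ0 _)

lemma bellmanLP_decomp (γ : ℝ) (P : ProbabilityMeasure (MDPParam S A)) (πs : A → ℝ)
    (v : S → ℝ) :
    bellmanLP γ P πs v
      = ∫ ω, (frew πs ω + γ * ftr πs (fun _ s' => v s') ω)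
          ∂(P : Measure (MDPParam S A)) := by
  unfold bellmanLP frew ftr
  congr 1
  funext ω
  rw [Finset.mul_sum, ← Finset.sum_add_distrib]
  exact Finset.sum_congr rfl fun a _ => by ring

lemma ftr_add_const {πs : A → ℝ} (hπ : πs ∈ stdSimplex ℝ A) {ω : MDPParam S A}
    (hω : GoodParam rmax ω) (g : A → S → ℝ) (x : ℝ) :
    ftr πs (fun a s' => g a s' + x) ω = ftr πs g ω + x := by
  unfold ftr
  calc ∑ a, πs a * ∑ s', ω.1 a s' * (g a s' + x)
      = ∑ a, (πs a * ∑ s', ω.1 a s' * g a s' + πs a * x) :=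
        Finset.sum_congr rfl fun a _ => by
          have h1 : ∑ s', ω.1 a s' * (g a s' + x) = (∑ s', ω.1 a s' * g a s') + x := by
            simp only [mul_add, Finset.sum_add_distrib, ← Finset.sum_mul, (hω.1 a).2, one_mul]
          rw [h1, mul_add]
    _ = (∑ a, πs a * ∑ s', ω.1 a s' * g a s') + x := by
        rw [Finset.sum_add_distrib, ← Finset.sum_mul, hπ.2, one_mul]

lemma ftr_sum {ι : Type*} (πs : A → ℝ) (t : Finset ι) (d : ι → A → S → ℝ)
    (ω : MDPParam S A) :
    ftr πs (fun a s' => ∑ k ∈ t, d k a s') ω = ∑ k ∈ t, ftr πs (d k) ω := by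
  unfold ftr
  calc ∑ a, πs a * ∑ s', ω.1 a s' * (∑ k ∈ t, d k a s')
      = ∑ a, ∑ k ∈ t, πs a * ∑ s', ω.1 a s' * d k a s' :=
        Finset.sum_congr rfl fun a _ => by
          have h1 : ∑ s', ω.1 a s' * ∑ k ∈ t, d k a s'
              = ∑ k ∈ t, ∑ s', ω.1 a s' * d k a s' := by
            simp only [Finset.mul_sum]
            exact Finset.sum_comm
          rw [h1, Finset.mul_sum]
    _ = ∑ k ∈ t, ∑ a, πs a * ∑ s', ω.1 a s' * d k a s' := Finset.sum_comm

lemma ftr_smul (πs : A → ℝ) (r : ℝ) (d : A → S → ℝ) (ω : MDPParam S A) :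
    ftr πs (fun a s' => r * d a s') ω = r * ftr πs d ω := by
  unfold ftr
  rw [Finset.mul_sum]
  exact Finset.sum_congr rfl fun a _ => by
    rw [Finset.mul_sum, Finset.mul_sum, Finset.mul_sum]
    exact Finset.sum_congr rfl fun s' _ => by ring

/-- Workhorse: integral of `ftr` against a "discounted polynomial + constant" family. -/
lemma integral_ftr_poly (hG : IsGoodAmbiguity rmax G) {s : S}
    {P : ProbabilityMeasure (MDPParam S A)} (hP : P ∈ G s)
    {πs : A → ℝ} (hπ : πs ∈ stdSimplex ℝ A) (N : ℕ) (γ : ℝ) (x : ℝ)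
    {d : ℕ → A → S → ℝ} {lo hi : ℝ} (hd : ∀ k a s', d k a s' ∈ Set.Icc lo hi) :
    ∫ ω, ftr πs (fun a s' => (∑ k ∈ Finset.range N, γ ^ k * d k a s') + x) ω
        ∂(P : Measure (MDPParam S A))
      = (∑ k ∈ Finset.range N, γ ^ k *
          ∫ ω, ftr πs (d k) ω ∂(P : Measure (MDPParam S A))) + x := by
  have hint : ∀ k, Integrable (fun ω => ftr πs (d k) ω) (P : Measure (MDPParam S A)) :=
    fun k => (integral_bddI _ (measurable_ftr _ _)
      ((ae_good hG hP).mono fun ω hω => ftr_mem hπ (fun a s' => hd k a s') hω)).1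
  have heq : ∀ᵐ ω ∂(P : Measure (MDPParam S A)),
      ftr πs (fun a s' => (∑ k ∈ Finset.range N, γ ^ k * d k a s') + x) ω
        = (∑ k ∈ Finset.range N, γ ^ k * ftr πs (d k) ω) + x := by
    filter_upwards [ae_good hG hP] with ω hω
    rw [ftr_add_const hπ hω, ftr_sum]
    congr 1
    exact Finset.sum_congr rfl fun k _ => ftr_smul πs (γ ^ k) (d k) ω
  rw [integral_congr_ae heq, integral_add (by
      exact integrable_finset_sum _ fun k _ => (hint k).const_mul _) (integrable_const x),
    integral_finset_sum _ fun k _ => (hint k).const_mul _]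
  simp only [integral_const, probReal_univ, smul_eq_mul, one_mul]
  congr 1
  exact Finset.sum_congr rfl fun k _ => integral_const_mul _ _

/-- `bellmanLP` splits into reward part plus `γ` times transition part. -/
lemma bellmanLP_eq_add (hG : IsGoodAmbiguity rmax G) {s : S}
    {P : ProbabilityMeasure (MDPParam S A)} (hP : P ∈ G s)
    {πs : A → ℝ} (hπ : πs ∈ stdSimplex ℝ A) (γ : ℝ) {v : S → ℝ} {M : ℝ}
    (hv : ∀ s', |v s'| ≤ M) :
    bellmanLP γ P πs v
      = (∫ ω, frew πs ω ∂(P : Measure (MDPParam S A)))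
        + γ * ∫ ω, ftr πs (fun _ s' => v s') ω ∂(P : Measure (MDPParam S A)) := by
  have h1 : Integrable (frew πs) (P : Measure (MDPParam S A)) :=
    (integral_bddI _ (measurable_frew _)
      ((ae_good hG hP).mono fun ω hω => frew_mem hπ hω)).1
  have h2 : Integrable (ftr πs fun _ s' => v s') (P : Measure (MDPParam S A)) :=
    (integral_bddI _ (measurable_ftr _ _)
      ((ae_good hG hP).mono fun ω hω =>
        ftr_mem hπ (fun a s' => abs_le.mp (hv s')) hω)).1
  rw [bellmanLP_decomp, integral_add h1 (h2.const_mul γ), integral_const_mul]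

end Aux2

section Aux3
set_option linter.unusedSectionVars false
variable {S A : Type} [Fintype S] [Fintype A]
variable {γ rmax : ℝ} {G : S → Set (ProbabilityMeasure (MDPParam S A))}
variable {π : List (S × A) → S → A → ℝ} {Ps : S → ℕ → ProbabilityMeasure (MDPParam S A)}

lemma integrable_ftr_poly (hG : IsGoodAmbiguity rmax G) {s : S}
    {P : ProbabilityMeasure (MDPParam S A)} (hP : P ∈ G s)
    {πs : A → ℝ} (hπ : πs ∈ stdSimplex ℝ A) (N : ℕ) (γ : ℝ) (x : ℝ)
    {d : ℕ → A → S → ℝ} {lo hi : ℝ} (hd : ∀ k a s', d k a s' ∈ Set.Icc lo hi) :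
    Integrable (fun ω => ftr πs (fun a s' => (∑ k ∈ Finset.range N, γ ^ k * d k a s') + x) ω)
      (P : Measure (MDPParam S A)) := by
  have hint : ∀ k, Integrable (fun ω => ftr πs (d k) ω) (P : Measure (MDPParam S A)) :=
    fun k => (integral_bddI _ (measurable_ftr _ _)
      ((ae_good hG hP).mono fun ω hω => ftr_mem hπ (fun a s' => hd k a s') hω)).1
  have heq : ∀ᵐ ω ∂(P : Measure (MDPParam S A)),
      (∑ k ∈ Finset.range N, γ ^ k * ftr πs (d k) ω) + x
        = ftr πs (fun a s' => (∑ k ∈ Finset.range N, γ ^ k * d k a s') + x) ω := by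
    filter_upwards [ae_good hG hP] with ω hω
    rw [ftr_add_const hπ hω, ftr_sum]
    congr 1
    exact (Finset.sum_congr rfl fun k _ => ftr_smul πs (γ ^ k) (d k) ω).symm
  exact ((integrable_finset_sum _ fun k _ => (hint k).const_mul _).add
    (integrable_const x)).congr heq

lemma integrable_ftr_v (hG : IsGoodAmbiguity rmax G) {s : S}
    {P : ProbabilityMeasure (MDPParam S A)} (hP : P ∈ G s)
    {πs : A → ℝ} (hπ : πs ∈ stdSimplex ℝ A) {v : S → ℝ} {M : ℝ}
    (hv : ∀ s', |v s'| ≤ M) :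
    Integrable (fun ω => ftr πs (fun _ s' => v s') ω) (P : Measure (MDPParam S A)) :=
  (integral_bddI _ (measurable_ftr _ _)
    ((ae_good hG hP).mono fun ω hω =>
      ftr_mem hπ (fun a s' => abs_le.mp (hv s')) hω)).1

lemma integral_ftr_v_add_const (hG : IsGoodAmbiguity rmax G) {s : S}
    {P : ProbabilityMeasure (MDPParam S A)} (hP : P ∈ G s)
    {πs : A → ℝ} (hπ : πs ∈ stdSimplex ℝ A) {v : S → ℝ} {M : ℝ}
    (hv : ∀ s', |v s'| ≤ M) (x : ℝ) :
    (∫ ω, ftr πs (fun _ s' => v s' + x) ω ∂(P : Measure (MDPParam S A)))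
      = (∫ ω, ftr πs (fun _ s' => v s') ω ∂(P : Measure (MDPParam S A))) + x := by
  have heq : ∀ᵐ ω ∂(P : Measure (MDPParam S A)),
      ftr πs (fun _ s' => v s' + x) ω = ftr πs (fun _ s' => v s') ω + x :=
    (ae_good hG hP).mono fun ω hω => ftr_add_const hπ hω _ x
  rw [integral_congr_ae heq,
    integral_add (integrable_ftr_v hG hP hπ hv) (integrable_const x)]
  simp

lemma integrable_ftr_v_add_const (hG : IsGoodAmbiguity rmax G) {s : S}
    {P : ProbabilityMeasure (MDPParam S A)} (hP : P ∈ G s)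
    {πs : A → ℝ} (hπ : πs ∈ stdSimplex ℝ A) {v : S → ℝ} {M : ℝ}
    (hv : ∀ s', |v s'| ≤ M) (x : ℝ) :
    Integrable (fun ω => ftr πs (fun _ s' => v s' + x) ω) (P : Measure (MDPParam S A)) := by
  have heq : ∀ᵐ ω ∂(P : Measure (MDPParam S A)),
      ftr πs (fun _ s' => v s') ω + x = ftr πs (fun _ s' => v s' + x) ω :=
    (ae_good hG hP).mono fun ω hω => (ftr_add_const hπ hω _ x).symm
  exact ((integrable_ftr_v hG hP hπ hv).add (integrable_const x)).congr heq

lemma bellmanLP_mem (hG : IsGoodAmbiguity rmax G) {s : S}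
    {P : ProbabilityMeasure (MDPParam S A)} (hP : P ∈ G s)
    {πs : A → ℝ} (hπ : πs ∈ stdSimplex ℝ A) (hγ0 : 0 ≤ γ) {v : S → ℝ} {M : ℝ}
    (hv : ∀ s', |v s'| ≤ M) :
    bellmanLP γ P πs v ∈ Set.Icc (-(γ * M)) (rmax + γ * M) := by
  rw [bellmanLP_decomp]
  refine (integral_bddI _ ((measurable_frew _).add ((measurable_ftr _ _).const_mul γ)) ?_).2
  filter_upwards [ae_good hG hP] with ω hω
  simp only [Pi.add_apply]
  have h1 := frew_mem hπ hω
  have h2 := ftr_mem hπ (fun a s' => abs_le.mp (hv s')) (rmax := rmax) hω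
  constructor
  · have h3 : γ * (-M) ≤ γ * ftr πs (fun _ s' => v s') ω :=
      mul_le_mul_of_nonneg_left h2.1 hγ0
    have := h1.1
    simp only [mul_neg] at h3
    linarith
  · have h3 : γ * ftr πs (fun _ s' => v s') ω ≤ γ * M := mul_le_mul_of_nonneg_left h2.2 hγ0
    have := h1.2
    linarith

lemma robInf_le_bellmanLP (hG : IsGoodAmbiguity rmax G) {s : S}
    {P : ProbabilityMeasure (MDPParam S A)} (hP : P ∈ G s)
    {πs : A → ℝ} (hπ : πs ∈ stdSimplex ℝ A) (hγ0 : 0 ≤ γ) {v : S → ℝ} {M : ℝ}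
    (hv : ∀ s', |v s'| ≤ M) :
    robInf γ G s πs v ≤ bellmanLP γ P πs v := by
  refine ciInf_le ⟨-(γ * M), ?_⟩ (⟨P, hP⟩ : ↥(G s))
  rintro x ⟨Q, rfl⟩
  exact (bellmanLP_mem hG Q.2 hπ hγ0 hv).1

/-- Key induction, lower bound. -/
lemma key_lower (hG : IsGoodAmbiguity rmax G) (hγ0 : 0 ≤ γ)
    {vinf : S → ℝ} {πstar : S → A → ℝ}
    (hfix : bellmanL γ G vinf = vinf)
    (hst : ∀ s, πstar s ∈ stdSimplex ℝ A ∧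
      robInf γ G s (πstar s) vinf = bellmanL γ G vinf s)
    {M : ℝ} (hv : ∀ s', |vinf s'| ≤ M)
    (hPs : ∀ s t, Ps s t ∈ G s) :
    ∀ (N : ℕ) (h : List (S × A)) (s : S),
      vinf s ≤ (∑ k ∈ Finset.range N,
          γ ^ k * expRewardAmb (fun _ s => πstar s) Ps k h s) + γ ^ N * M := by
  have hπb : ∀ (h : List (S × A)) (s : S),
      (fun (_ : List (S × A)) (s : S) => πstar s) h s ∈ stdSimplex ℝ A :=
    fun _ s => (hst s).1
  intro N
  induction N with
  | zero =>
      intro h s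
      simpa using (abs_le.mp (hv s)).2
  | succ N ih =>
      intro h s
      have hP := hPs s h.length
      have hd : ∀ (k : ℕ) (a : A) (s' : S),
          expRewardAmb (fun _ s => πstar s) Ps k (h ++ [(s, a)]) s' ∈ Set.Icc 0 rmax :=
        fun k a s' => expRewardAmb_mem hG hπb hPs k _ s'
      have step2 : vinf s ≤ bellmanLP γ (Ps s h.length) (πstar s) vinf := by
        calc vinf s = robInf γ G s (πstar s) vinf := by rw [(hst s).2, hfix]
          _ ≤ _ := robInf_le_bellmanLP hG hP (hst s).1 hγ0 hv
      rw [bellmanLP_eq_add hG hP (hst s).1 γ hv] at step2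
      have step4 : (∫ ω, ftr (πstar s) (fun _ s' => vinf s') ω
            ∂((Ps s h.length : Measure (MDPParam S A))))
          ≤ ∫ ω, ftr (πstar s) (fun a s' =>
              (∑ k ∈ Finset.range N,
                γ ^ k * expRewardAmb (fun _ s => πstar s) Ps k (h ++ [(s, a)]) s')
              + γ ^ N * M) ω ∂((Ps s h.length : Measure (MDPParam S A))) := by
        refine integral_mono_ae (integrable_ftr_v hG hP (hst s).1 hv)
          (integrable_ftr_poly hG hP (hst s).1 N γ _ hd) ?_
        filter_upwards [ae_good hG hP] with ω hω
        exact ftr_le (hst s).1 (fun a s' => ih (h ++ [(s, a)]) s') hω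
      rw [integral_ftr_poly hG hP (hst s).1 N γ _ hd] at step4
      have step6 : ∀ k : ℕ,
          (∫ ω, ftr (πstar s) (fun a s' =>
              expRewardAmb (fun _ s => πstar s) Ps k (h ++ [(s, a)]) s') ω
            ∂((Ps s h.length : Measure (MDPParam S A))))
          = expRewardAmb (fun _ s => πstar s) Ps (k + 1) h s := fun k => rfl
      simp only [step6] at step4
      have step7 : (∫ ω, frew (πstar s) ω ∂((Ps s h.length : Measure (MDPParam S A))))
          = expRewardAmb (fun _ s => πstar s) Ps 0 h s := rfl
      rw [step7] at step2
      have h5 : γ * ((∑ k ∈ Finset.range N,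
            γ ^ k * expRewardAmb (fun _ s => πstar s) Ps (k + 1) h s) + γ ^ N * M)
          = (∑ k ∈ Finset.range N,
            γ ^ (k + 1) * expRewardAmb (fun _ s => πstar s) Ps (k + 1) h s)
            + γ ^ (N + 1) * M := by
        rw [mul_add, Finset.mul_sum]
        congr 1
        · exact Finset.sum_congr rfl fun k _ => by ring
        · ring
      have h6 := mul_le_mul_of_nonneg_left step4 hγ0
      rw [h5] at h6
      rw [Finset.sum_range_succ', pow_zero, one_mul]
      linarith

lemma key_lower_tsum (hG : IsGoodAmbiguity rmax G) (hγ0 : 0 ≤ γ) (hγ1 : γ < 1)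
    {vinf : S → ℝ} {πstar : S → A → ℝ}
    (hfix : bellmanL γ G vinf = vinf)
    (hst : ∀ s, πstar s ∈ stdSimplex ℝ A ∧
      robInf γ G s (πstar s) vinf = bellmanL γ G vinf s)
    {M : ℝ} (hv : ∀ s', |vinf s'| ≤ M)
    (hPs : ∀ s t, Ps s t ∈ G s) (s₁ : S) :
    vinf s₁ ≤ wDisc γ (fun _ s => πstar s) Ps s₁ := by
  have hπb : ∀ (h : List (S × A)) (s : S),
      (fun (_ : List (S × A)) (s : S) => πstar s) h s ∈ stdSimplex ℝ A :=
    fun _ s => (hst s).1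
  have hsum := summable_wterm hγ0 hγ1 hG hπb hPs s₁
  have htend : Filter.Tendsto (fun N : ℕ =>
      (∑ k ∈ Finset.range N,
        γ ^ k * expRewardAmb (fun _ s => πstar s) Ps k [] s₁) + γ ^ N * M)
      Filter.atTop (nhds (wDisc γ (fun _ s => πstar s) Ps s₁ + 0)) :=
    hsum.hasSum.tendsto_sum_nat.add
      (by simpa using (tendsto_pow_atTop_nhds_zero_of_lt_one hγ0 hγ1).mul_const M)
  rw [add_zero] at htend
  exact ge_of_tendsto' htend fun N => key_lower hG hγ0 hfix hst hv hPs N [] s₁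

/-- Key induction, upper bound against an `ε`-optimal stationary adversary. -/
lemma key_upper (hG : IsGoodAmbiguity rmax G) (hγ0 : 0 ≤ γ)
    {vinf : S → ℝ} {Q : S → ProbabilityMeasure (MDPParam S A)} (hQ : ∀ s, Q s ∈ G s)
    {ε c M : ℝ} (hc : 0 ≤ c) (hεc : ε + γ * c ≤ c)
    (hopt : ∀ s, ∀ πs ∈ stdSimplex ℝ A, bellmanLP γ (Q s) πs vinf ≤ vinf s + ε)
    (hv : ∀ s', |vinf s'| ≤ M) (hπ : IsHRPolicy π) :
    ∀ (N : ℕ) (h : List (S × A)) (s : S),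
      (∑ k ∈ Finset.range N, γ ^ k * expRewardAmb π (fun s _ => Q s) k h s)
        ≤ vinf s + c + γ ^ N * M := by
  have hPs : ∀ (s : S) (t : ℕ), (fun (s : S) (_ : ℕ) => Q s) s t ∈ G s := fun s _ => hQ s
  intro N
  induction N with
  | zero =>
      intro h s
      have := (abs_le.mp (hv s)).1
      simp only [Finset.range_zero, Finset.sum_empty, pow_zero, one_mul]
      linarith
  | succ N ih =>
      intro h s
      have hP : Q s ∈ G s := hQ s
      have hd : ∀ (k : ℕ) (a : A) (s' : S),
          expRewardAmb π (fun s _ => Q s) k (h ++ [(s, a)]) s' ∈ Set.Icc 0 rmax :=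
        fun k a s' => expRewardAmb_mem hG hπ hPs k _ s'
      -- the sum ∑_{k<N} γ^k ∫ ftr (d k) equals ∫ ftr (big + 0)
      have hpoly := integral_ftr_poly hG hP (hπ h s) N γ 0 hd
      have step6 : ∀ k : ℕ,
          (∫ ω, ftr (π h s) (fun a s' =>
              expRewardAmb π (fun s _ => Q s) k (h ++ [(s, a)]) s') ω
            ∂((Q s : Measure (MDPParam S A))))
          = expRewardAmb π (fun s _ => Q s) (k + 1) h s := fun k => rfl
      simp only [step6] at hpoly
      -- compare with ftr applied to vinf + const
      have step4 : (∫ ω, ftr (π h s) (fun a s' =>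
            (∑ k ∈ Finset.range N,
              γ ^ k * expRewardAmb π (fun s _ => Q s) k (h ++ [(s, a)]) s') + 0) ω
            ∂((Q s : Measure (MDPParam S A))))
          ≤ ∫ ω, ftr (π h s) (fun _ s' => vinf s' + (c + γ ^ N * M)) ω
            ∂((Q s : Measure (MDPParam S A))) := by
        refine integral_mono_ae (integrable_ftr_poly hG hP (hπ h s) N γ 0 hd)
          (integrable_ftr_v_add_const hG hP (hπ h s) hv _) ?_
        filter_upwards [ae_good hG hP] with ω hω
        refine ftr_le (hπ h s) (fun a s' => ?_) hω
        have := ih (h ++ [(s, a)]) s'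
        linarith
      rw [hpoly, add_zero, integral_ftr_v_add_const hG hP (hπ h s) hv] at step4
      -- bellman bound
      have hbell := hopt s (π h s) (hπ h s)
      rw [bellmanLP_eq_add hG hP (hπ h s) γ hv] at hbell
      have step7 : (∫ ω, frew (π h s) ω ∂((Q s : Measure (MDPParam S A))))
          = expRewardAmb π (fun s _ => Q s) 0 h s := rfl
      rw [step7] at hbell
      have h6 := mul_le_mul_of_nonneg_left step4 hγ0
      have h5 : γ * (∑ k ∈ Finset.range N,
            γ ^ k * expRewardAmb π (fun s _ => Q s) (k + 1) h s)
          = ∑ k ∈ Finset.range N,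
            γ ^ (k + 1) * expRewardAmb π (fun s _ => Q s) (k + 1) h s := by
        rw [Finset.mul_sum]
        exact Finset.sum_congr rfl fun k _ => by ring
      rw [h5] at h6
      have hpow : γ * (γ ^ N * M) = γ ^ (N + 1) * M := by ring
      rw [Finset.sum_range_succ', pow_zero, one_mul]
      have hmul : γ * ((∫ ω, ftr (π h s) (fun _ s' => vinf s') ω
            ∂((Q s : Measure (MDPParam S A)))) + (c + γ ^ N * M))
          = γ * (∫ ω, ftr (π h s) (fun _ s' => vinf s') ω
            ∂((Q s : Measure (MDPParam S A)))) + γ * c + γ ^ (N + 1) * M := by ring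
      rw [hmul] at h6
      linarith

lemma key_upper_tsum (hG : IsGoodAmbiguity rmax G) (hγ0 : 0 ≤ γ) (hγ1 : γ < 1)
    {vinf : S → ℝ} {Q : S → ProbabilityMeasure (MDPParam S A)} (hQ : ∀ s, Q s ∈ G s)
    {ε c M : ℝ} (hc : 0 ≤ c) (hεc : ε + γ * c ≤ c)
    (hopt : ∀ s, ∀ πs ∈ stdSimplex ℝ A, bellmanLP γ (Q s) πs vinf ≤ vinf s + ε)
    (hv : ∀ s', |vinf s'| ≤ M) (hπ : IsHRPolicy π) (s₁ : S) :
    wDisc γ π (fun s _ => Q s) s₁ ≤ vinf s₁ + c := by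
  have hPs : ∀ (s : S) (t : ℕ), (fun (s : S) (_ : ℕ) => Q s) s t ∈ G s := fun s _ => hQ s
  have hsum := summable_wterm hγ0 hγ1 hG hπ hPs s₁
  have htend2 : Filter.Tendsto (fun N : ℕ => vinf s₁ + c + γ ^ N * M)
      Filter.atTop (nhds (vinf s₁ + c + 0)) :=
    tendsto_const_nhds.add
      (by simpa using (tendsto_pow_atTop_nhds_zero_of_lt_one hγ0 hγ1).mul_const M)
  rw [add_zero] at htend2
  exact le_of_tendsto_of_tendsto' hsum.hasSum.tendsto_sum_nat htend2
    fun N => key_upper hG hγ0 hQ hc hεc hopt hv hπ N [] s₁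

end Aux3

section Aux4
set_option linter.unusedSectionVars false
set_option linter.unusedVariables false
variable {S A : Type} [Fintype S] [Fintype A]
variable {γ rmax : ℝ} {G : S → Set (ProbabilityMeasure (MDPParam S A))}

/-- Payoff of pure action `a`. -/
def gact (γ : ℝ) (v : S → ℝ) (a : A) (ω : MDPParam S A) : ℝ :=
  ω.2.1 a + γ * ∑ s', ω.1 a s' * v s'

lemma measurable_gact (γ : ℝ) (v : S → ℝ) (a : A) :
    Measurable (gact (S := S) (A := A) γ v a) := by unfold gact; fun_prop

lemma gact_mem (hγ0 : 0 ≤ γ) {v : S → ℝ} {M : ℝ} (hv : ∀ s', |v s'| ≤ M) (a : A)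
    {ω : MDPParam S A} (hω : GoodParam rmax ω) :
    gact γ v a ω ∈ Set.Icc (-(γ * M)) (rmax + γ * M) := by
  have h2 : (∑ s', ω.1 a s' * v s') ∈ Set.Icc (-M) M :=
    combo_mem (hω.1 a).1 (hω.1 a).2 fun s' => abs_le.mp (hv s')
  have h1 := hω.2 a
  have h3 : γ * (-M) ≤ γ * ∑ s', ω.1 a s' * v s' := mul_le_mul_of_nonneg_left h2.1 hγ0
  have h4 : γ * ∑ s', ω.1 a s' * v s' ≤ γ * M := mul_le_mul_of_nonneg_left h2.2 hγ0
  unfold gact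
  constructor
  · have := h1.1; nlinarith
  · have := h1.2; nlinarith

lemma integrable_gact (hG : IsGoodAmbiguity rmax G) {s : S}
    {P : ProbabilityMeasure (MDPParam S A)} (hP : P ∈ G s) (hγ0 : 0 ≤ γ)
    {v : S → ℝ} {M : ℝ} (hv : ∀ s', |v s'| ≤ M) (a : A) :
    Integrable (gact γ v a) (P : Measure (MDPParam S A)) :=
  (integral_bddI _ (measurable_gact γ v a)
    ((ae_good hG hP).mono fun ω hω => gact_mem hγ0 hv a hω)).1

lemma bellmanLP_linear (hG : IsGoodAmbiguity rmax G) {s : S}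
    {P : ProbabilityMeasure (MDPParam S A)} (hP : P ∈ G s) (hγ0 : 0 ≤ γ)
    {v : S → ℝ} {M : ℝ} (hv : ∀ s', |v s'| ≤ M) (πs : A → ℝ) :
    bellmanLP γ P πs v
      = ∑ a, πs a * ∫ ω, gact γ v a ω ∂(P : Measure (MDPParam S A)) := by
  unfold bellmanLP
  rw [show (∫ ω, ∑ a, πs a * (ω.2.1 a + γ * ∑ s', ω.1 a s' * v s')
        ∂(P : Measure (MDPParam S A)))
      = ∫ ω, ∑ a, πs a * gact γ v a ω ∂(P : Measure (MDPParam S A)) from rfl,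
    integral_finset_sum _ fun a _ => (integrable_gact hG hP hγ0 hv a).const_mul (πs a)]
  exact Finset.sum_congr rfl fun a _ => integral_const_mul _ _

lemma integral_mix {X : Type*} [MeasurableSpace X] {P Q : Measure X} {θ : ℝ≥0∞}
    (hθ : θ ≤ 1) {f : X → ℝ} (hIP : Integrable f P) (hIQ : Integrable f Q) :
    ∫ x, f x ∂(θ • P + (1 - θ) • Q)
      = θ.toReal * ∫ x, f x ∂P + (1 - θ).toReal * ∫ x, f x ∂Q := by
  have hθne : θ ≠ ⊤ := (hθ.trans_lt ENNReal.one_lt_top).ne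
  have hθne' : (1 - θ) ≠ ⊤ := (tsub_le_self.trans_lt ENNReal.one_lt_top).ne
  rw [integral_add_measure (hIP.smul_measure hθne) (hIQ.smul_measure hθne'),
    integral_smul_measure, integral_smul_measure, smul_eq_mul, smul_eq_mul]

/-- ε-optimal stationary adversary exists (minimax via separation). -/
lemma exists_eps_opt [Nonempty A] (hG : IsGoodAmbiguity rmax G) (hγ0 : 0 ≤ γ)
    {vinf : S → ℝ} (hfix : bellmanL γ G vinf = vinf) {M : ℝ} (hv : ∀ s', |vinf s'| ≤ M)
    (s : S) {ε : ℝ} (hε : 0 < ε) :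
    ∃ P ∈ G s, ∀ πs ∈ stdSimplex ℝ A, bellmanLP γ P πs vinf ≤ vinf s + ε := by
  classical
  by_contra hcon
  push_neg at hcon
  obtain ⟨P0, hP0⟩ := (hG s).1
  haveI : Nonempty ↥(G s) := ⟨⟨P0, hP0⟩⟩
  set B : ℝ := vinf s + ε with hBdef
  set g : ProbabilityMeasure (MDPParam S A) → (A → ℝ) :=
    fun P a => ∫ ω, gact γ vinf a ω ∂(P : Measure (MDPParam S A)) with hgdef
  set D : Set (A → ℝ) := g '' (G s) with hDdef
  set O : Set (A → ℝ) := Set.pi Set.univ (fun _ : A => Set.Iio B) with hOdef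
  have hOmem : ∀ x : A → ℝ, x ∈ O ↔ ∀ a, x a < B := by
    intro x; simp [hOdef, Set.mem_pi]
  have hOopen : IsOpen O := isOpen_set_pi Set.finite_univ fun a _ => isOpen_Iio
  have hOconv : Convex ℝ O := convex_pi fun a _ => convex_Iio B
  have hDconv : Convex ℝ D := by
    rintro x ⟨P, hP, rfl⟩ y ⟨Q, hQ, rfl⟩ t1 t2 ht1 ht2 hsum
    have hθ : ENNReal.ofReal t1 ≤ 1 := by
      rw [← ENNReal.ofReal_one]
      exact ENNReal.ofReal_le_ofReal (by linarith)
    have hprob : IsProbabilityMeasure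
        (ENNReal.ofReal t1 • (P : Measure (MDPParam S A))
          + (1 - ENNReal.ofReal t1) • (Q : Measure (MDPParam S A))) := by
      constructor
      simp only [Measure.add_apply, Measure.smul_apply, smul_eq_mul, measure_univ, mul_one]
      exact add_tsub_cancel_of_le hθ
    set R : ProbabilityMeasure (MDPParam S A) :=
      ⟨ENNReal.ofReal t1 • (P : Measure (MDPParam S A))
        + (1 - ENNReal.ofReal t1) • (Q : Measure (MDPParam S A)), hprob⟩ with hRdef
    have hR : R ∈ G s := (hG s).2.1 P hP Q hQ _ hθ R rfl
    refine ⟨R, hR, ?_⟩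
    funext a
    have hmix : g R a = (ENNReal.ofReal t1).toReal * g P a
        + (1 - ENNReal.ofReal t1).toReal * g Q a :=
      integral_mix hθ (integrable_gact hG hP hγ0 hv a) (integrable_gact hG hQ hγ0 hv a)
    have h1 : (ENNReal.ofReal t1).toReal = t1 := ENNReal.toReal_ofReal ht1
    have h2 : (1 - ENNReal.ofReal t1).toReal = t2 := by
      rw [← ENNReal.ofReal_one, ← ENNReal.ofReal_sub _ ht1, ENNReal.toReal_ofReal (by linarith)]
      linarith
    rw [hmix, h1, h2]
    simp [smul_eq_mul]
  have hdisj : Disjoint O D := by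
    rw [Set.disjoint_left]
    rintro x hx ⟨P, hP, rfl⟩
    obtain ⟨πs, hπs, hlt⟩ := hcon P hP
    have hlin := bellmanLP_linear hG hP hγ0 hv πs
    have hle : ∑ a, πs a * g P a ≤ ∑ a, πs a * B :=
      combo_le hπs.1 fun a => le_of_lt ((hOmem _).mp hx a)
    rw [← Finset.sum_mul, hπs.2, one_mul] at hle
    rw [hlin] at hlt
    exact absurd hlt (by exact not_lt.mpr hle)
  obtain ⟨f, u, hfO, hfD⟩ := geometric_hahn_banach_open hOconv hOopen hDconv hdisj
  set sgl : A → (A → ℝ) := fun a => Pi.single a 1 with hsgldef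
  set w : A → ℝ := fun a => f (sgl a) with hwdef
  have hrep : ∀ x : A → ℝ, f x = ∑ a, x a * w a := by
    intro x
    have hxs : x = ∑ a, (Pi.single a (x a) : A → ℝ) := (Finset.univ_sum_single x).symm
    calc f x = f (∑ a, (Pi.single a (x a) : A → ℝ)) := by rw [← hxs]
      _ = ∑ a, f (Pi.single a (x a) : A → ℝ) := _root_.map_sum f _ _
      _ = ∑ a, x a * w a := Finset.sum_congr rfl fun a _ => by
          have hsingle : (Pi.single a (x a) : A → ℝ) = x a • sgl a := by
            rw [hsgldef, ← Pi.single_smul, smul_eq_mul, mul_one]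
          rw [hsingle, _root_.map_smul, smul_eq_mul]
  set z : A → ℝ := fun _ => B - 1 with hzdef
  have hzO : z ∈ O := (hOmem z).mpr fun a => by simp [hzdef]
  have hwpos : ∀ a, 0 ≤ w a := by
    intro a
    by_contra hwa
    push_neg at hwa
    set t : ℝ := max 0 ((f z - u) / w a) with htdef
    have ht0 : 0 ≤ t := le_max_left _ _
    have hzt : z - t • sgl a ∈ O := by
      refine (hOmem _).mpr fun b => ?_
      have hb : (z - t • sgl a) b = z b - t * sgl a b := by
        simp [smul_eq_mul]
      rw [hb]
      rcases eq_or_ne b a with hba | hba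
      · subst hba; simp [hzdef, hsgldef, Pi.single_eq_same]; linarith
      · simp [hzdef, hsgldef, Pi.single_eq_of_ne hba]
    have hfzt : f (z - t • sgl a) = f z - t * w a := by
      rw [_root_.map_sub, _root_.map_smul, smul_eq_mul]
    have h1 : t * w a ≤ f z - u := by
      rcases le_or_gt ((f z - u) / w a) 0 with hc | hc
      · have ht' : t = 0 := max_eq_left hc
        rw [ht', zero_mul]
        rcases div_nonpos_iff.mp hc with ⟨h01, h02⟩ | ⟨h01, h02⟩
        · linarith
        · linarith
      · have ht' : t = (f z - u) / w a := max_eq_right hc.le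
        rw [ht', div_mul_cancel₀ _ (ne_of_lt hwa)]
    have hlt := hfO _ hzt
    rw [hfzt] at hlt
    linarith
  have hWnn : 0 ≤ ∑ a, w a := Finset.sum_nonneg fun a _ => hwpos a
  have hWpos : 0 < ∑ a, w a := by
    rcases hWnn.lt_or_eq with h | h
    · exact h
    · exfalso
      have hall : ∀ a ∈ Finset.univ, w a = 0 :=
        (Finset.sum_eq_zero_iff_of_nonneg fun a _ => hwpos a).mp h.symm
      have hf0 : ∀ x : A → ℝ, f x = 0 := by
        intro x
        rw [hrep]
        exact Finset.sum_eq_zero fun a _ => by rw [hall a (Finset.mem_univ a), mul_zero]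
      have h1 := hfO z hzO
      have h2 := hfD (g P0) ⟨P0, hP0, rfl⟩
      rw [hf0] at h1 h2
      linarith
  set W : ℝ := ∑ a, w a with hWdef
  set πs : A → ℝ := fun a => w a / W with hπsdef
  have hπsmem : πs ∈ stdSimplex ℝ A :=
    ⟨fun a => div_nonneg (hwpos a) hWpos.le, by
      rw [hπsdef]; rw [← Finset.sum_div, ← hWdef, div_self hWpos.ne']⟩
  have hBW : B * W ≤ u := by
    by_contra hlt
    push_neg at hlt
    have huW : u / W < B := (div_lt_iff₀ hWpos).mpr (by linarith)
    set δ : ℝ := (B - u / W) / 2 with hδdef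
    have hδpos : 0 < δ := by rw [hδdef]; linarith
    have hmem : (fun _ : A => B - δ) ∈ O := (hOmem _).mpr fun a => by linarith
    have hflt := hfO _ hmem
    rw [hrep] at hflt
    have hsum : ∑ a, (B - δ) * w a = (B - δ) * W := by rw [← Finset.mul_sum]
    rw [hsum] at hflt
    have h2 : u / W < B - δ := by rw [hδdef]; linarith
    have h3 : u < (B - δ) * W := (div_lt_iff₀ hWpos).mp h2
    linarith
  have hrob : B ≤ robInf γ G s πs vinf := by
    refine le_ciInf fun P => ?_
    have h1 : u ≤ f (g P.1) := hfD _ ⟨P.1, P.2, rfl⟩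
    rw [hrep] at h1
    have h2 : bellmanLP γ P.1 πs vinf = (∑ a, g P.1 a * w a) / W := by
      rw [bellmanLP_linear hG P.2 hγ0 hv, Finset.sum_div]
      exact Finset.sum_congr rfl fun a _ => by
        rw [hπsdef]
        rw [div_mul_eq_mul_div, mul_comm]
    rw [h2]
    exact (le_div_iff₀ hWpos).mpr (le_trans hBW h1)
  have hsup : robInf γ G s πs vinf ≤ vinf s := by
    have hfs := congrFun hfix s
    rw [← hfs]
    show robInf γ G s πs vinf ≤ ⨆ πs' : stdSimplex ℝ A, robInf γ G s (πs' : A → ℝ) vinf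
    refine le_ciSup_of_le ⟨rmax + γ * M, ?_⟩ (⟨πs, hπsmem⟩ : stdSimplex ℝ A) le_rfl
    rintro x ⟨πs', rfl⟩
    exact (robInf_le_bellmanLP hG hP0 πs'.2 hγ0 hv).trans (bellmanLP_mem hG hP0 πs'.2 hγ0 hv).2
  rw [hBdef] at hrob
  linarith [hrob.trans hsup]
end Aux4

section Main
set_option linter.unusedSectionVars false
set_option linter.unusedVariables false
variable {S A : Type} [Fintype S] [Fintype A]

theorem stationary_nonstationary_same_value'
    (γ rmax : ℝ) (hγ : 0 < γ) (hγ1 : γ < 1) (hrmax : 0 ≤ rmax)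
    (G : S → Set (ProbabilityMeasure (MDPParam S A)))
    (hG : IsGoodAmbiguity rmax G)
    (s₁ : S) (vinf : S → ℝ) (πstar : S → A → ℝ)
    (hπstar : IsSRobustStationary γ G vinf πstar) :
    (⨆ π : {π : List (S × A) → S → A → ℝ // IsHRPolicy π},
        ⨅ Qs : {Qs : S → ProbabilityMeasure (MDPParam S A) // ∀ s, Qs s ∈ G s},
          wDisc γ (π : List (S × A) → S → A → ℝ)
            (fun s _ => (Qs : S → ProbabilityMeasure (MDPParam S A)) s) s₁)
      = (⨆ π : {π : List (S × A) → S → A → ℝ // IsHRPolicy π},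
          ⨅ Ps : {Ps : S → ℕ → ProbabilityMeasure (MDPParam S A) // ∀ s t, Ps s t ∈ G s},
            wDisc γ (π : List (S × A) → S → A → ℝ)
              (Ps : S → ℕ → ProbabilityMeasure (MDPParam S A)) s₁) ∧
    (⨅ Qs : {Qs : S → ProbabilityMeasure (MDPParam S A) // ∀ s, Qs s ∈ G s},
        wDisc γ (fun _ s => πstar s)
          (fun s _ => (Qs : S → ProbabilityMeasure (MDPParam S A)) s) s₁)
      = (⨆ π : {π : List (S × A) → S → A → ℝ // IsHRPolicy π},
          ⨅ Qs : {Qs : S → ProbabilityMeasure (MDPParam S A) // ∀ s, Qs s ∈ G s},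
            wDisc γ (π : List (S × A) → S → A → ℝ)
              (fun s _ => (Qs : S → ProbabilityMeasure (MDPParam S A)) s) s₁) ∧
    (⨅ Ps : {Ps : S → ℕ → ProbabilityMeasure (MDPParam S A) // ∀ s t, Ps s t ∈ G s},
        wDisc γ (fun _ s => πstar s) (Ps : S → ℕ → ProbabilityMeasure (MDPParam S A)) s₁)
      = (⨆ π : {π : List (S × A) → S → A → ℝ // IsHRPolicy π},
          ⨅ Ps : {Ps : S → ℕ → ProbabilityMeasure (MDPParam S A) // ∀ s t, Ps s t ∈ G s},
            wDisc γ (π : List (S × A) → S → A → ℝ)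
              (Ps : S → ℕ → ProbabilityMeasure (MDPParam S A)) s₁) := by
  obtain ⟨hfix, hst⟩ := hπstar
  have hγ0 : (0 : ℝ) ≤ γ := hγ.le
  haveI hA : Nonempty A := by
    by_contra hA
    rw [not_nonempty_iff] at hA
    have h1 := (hst s₁).1.2
    rw [Finset.univ_eq_empty, Finset.sum_empty] at h1
    exact zero_ne_one h1
  obtain ⟨M, hM⟩ : ∃ M : ℝ, ∀ s', |vinf s'| ≤ M :=
    ⟨Finset.univ.sup' ⟨s₁, Finset.mem_univ s₁⟩ fun s => |vinf s|,
      fun s' => Finset.le_sup' (fun s => |vinf s|) (Finset.mem_univ s')⟩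
  have hπbHR : IsHRPolicy (fun (_ : List (S × A)) (s : S) => πstar s) := fun _ s => (hst s).1
  haveI : Nonempty {π : List (S × A) → S → A → ℝ // IsHRPolicy π} :=
    ⟨⟨fun _ s => πstar s, hπbHR⟩⟩
  haveI : Nonempty {Qs : S → ProbabilityMeasure (MDPParam S A) // ∀ s, Qs s ∈ G s} :=
    ⟨⟨fun s => (hG s).1.choose, fun s => (hG s).1.choose_spec⟩⟩
  haveI : Nonempty {Ps : S → ℕ → ProbabilityMeasure (MDPParam S A) // ∀ s t, Ps s t ∈ G s} :=
    ⟨⟨fun s _ => (hG s).1.choose, fun s _ => (hG s).1.choose_spec⟩⟩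
  -- nonnegativity of values
  have hnn : ∀ (π : List (S × A) → S → A → ℝ), IsHRPolicy π →
      ∀ (Ps : S → ℕ → ProbabilityMeasure (MDPParam S A)), (∀ s t, Ps s t ∈ G s) →
      0 ≤ wDisc γ π Ps s₁ := fun π hπ Ps hPs =>
    tsum_nonneg fun k => mul_nonneg (pow_nonneg hγ0 k)
      (expRewardAmb_mem hG hπ hPs k [] s₁).1
  -- fact 1 : stationary inf is at most vinf s₁, for any HR policy
  have fact1 : ∀ (π : List (S × A) → S → A → ℝ), IsHRPolicy π →
      (⨅ Qs : {Qs : S → ProbabilityMeasure (MDPParam S A) // ∀ s, Qs s ∈ G s},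
        wDisc γ π (fun s _ => (Qs : S → ProbabilityMeasure (MDPParam S A)) s) s₁)
      ≤ vinf s₁ := by
    intro π hπ
    by_contra hlt
    push_neg at hlt
    set ε : ℝ := ((⨅ Qs : {Qs : S → ProbabilityMeasure (MDPParam S A) // ∀ s, Qs s ∈ G s},
        wDisc γ π (fun s _ => (Qs : S → ProbabilityMeasure (MDPParam S A)) s) s₁)
        - vinf s₁) / 2 with hεdef
    have hεpos : 0 < ε := by rw [hεdef]; linarith
    have hε'pos : 0 < ε * (1 - γ) := mul_pos hεpos (by linarith)
    have hch : ∀ s : S, ∃ P ∈ G s, ∀ πs ∈ stdSimplex ℝ A,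
        bellmanLP γ P πs vinf ≤ vinf s + ε * (1 - γ) :=
      fun s => exists_eps_opt hG hγ0 hfix hM s hε'pos
    choose Q hQmem hQopt using hch
    have hεc : ε * (1 - γ) + γ * ε ≤ ε := by nlinarith
    have hkey := key_upper_tsum hG hγ0 hγ1 hQmem hεpos.le hεc hQopt hM hπ s₁
    have hle : (⨅ Qs : {Qs : S → ProbabilityMeasure (MDPParam S A) // ∀ s, Qs s ∈ G s},
        wDisc γ π (fun s _ => (Qs : S → ProbabilityMeasure (MDPParam S A)) s) s₁)
        ≤ wDisc γ π (fun s _ => Q s) s₁ := by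
      refine ciInf_le ⟨0, ?_⟩ (⟨Q, hQmem⟩ :
        {Qs : S → ProbabilityMeasure (MDPParam S A) // ∀ s, Qs s ∈ G s})
      rintro x ⟨Qs, rfl⟩
      exact hnn π hπ _ fun s t => Qs.2 s
    rw [hεdef] at hεpos
    linarith
  -- fact 2 : non-stationary inf ≤ stationary inf
  have fact2 : ∀ (π : List (S × A) → S → A → ℝ), IsHRPolicy π →
      (⨅ Ps : {Ps : S → ℕ → ProbabilityMeasure (MDPParam S A) // ∀ s t, Ps s t ∈ G s},
        wDisc γ π (Ps : S → ℕ → ProbabilityMeasure (MDPParam S A)) s₁)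
      ≤ (⨅ Qs : {Qs : S → ProbabilityMeasure (MDPParam S A) // ∀ s, Qs s ∈ G s},
        wDisc γ π (fun s _ => (Qs : S → ProbabilityMeasure (MDPParam S A)) s) s₁) := by
    intro π hπ
    refine le_ciInf fun Qs => ?_
    refine ciInf_le ⟨0, ?_⟩ (⟨fun s _ => Qs.1 s, fun s t => Qs.2 s⟩ :
      {Ps : S → ℕ → ProbabilityMeasure (MDPParam S A) // ∀ s t, Ps s t ∈ G s})
    rintro x ⟨Ps, rfl⟩
    exact hnn π hπ _ Ps.2
  -- fact 3 : the S-robust strategy guarantees vinf s₁ against non-stationary adversaries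
  have fact3 : vinf s₁
      ≤ ⨅ Ps : {Ps : S → ℕ → ProbabilityMeasure (MDPParam S A) // ∀ s t, Ps s t ∈ G s},
        wDisc γ (fun _ s => πstar s) (Ps : S → ℕ → ProbabilityMeasure (MDPParam S A)) s₁ :=
    le_ciInf fun Ps => key_lower_tsum hG hγ0 hγ1 hfix hst hM Ps.2 s₁
  have e2 : (⨅ Ps : {Ps : S → ℕ → ProbabilityMeasure (MDPParam S A) // ∀ s t, Ps s t ∈ G s},
      wDisc γ (fun _ s => πstar s) (Ps : S → ℕ → ProbabilityMeasure (MDPParam S A)) s₁)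
      = vinf s₁ :=
    le_antisymm ((fact2 _ hπbHR).trans (fact1 _ hπbHR)) fact3
  have e1 : (⨅ Qs : {Qs : S → ProbabilityMeasure (MDPParam S A) // ∀ s, Qs s ∈ G s},
      wDisc γ (fun _ s => πstar s)
        (fun s _ => (Qs : S → ProbabilityMeasure (MDPParam S A)) s) s₁) = vinf s₁ :=
    le_antisymm (fact1 _ hπbHR) (fact3.trans (fact2 _ hπbHR))
  have sup_stat : (⨆ π : {π : List (S × A) → S → A → ℝ // IsHRPolicy π},
      ⨅ Qs : {Qs : S → ProbabilityMeasure (MDPParam S A) // ∀ s, Qs s ∈ G s},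
        wDisc γ (π : List (S × A) → S → A → ℝ)
          (fun s _ => (Qs : S → ProbabilityMeasure (MDPParam S A)) s) s₁) = vinf s₁ := by
    refine le_antisymm (ciSup_le fun π => fact1 π.1 π.2) ?_
    refine le_ciSup_of_le ⟨vinf s₁, ?_⟩ (⟨fun _ s => πstar s, hπbHR⟩ :
      {π : List (S × A) → S → A → ℝ // IsHRPolicy π}) e1.ge
    rintro x ⟨π, rfl⟩
    exact fact1 π.1 π.2
  have sup_non : (⨆ π : {π : List (S × A) → S → A → ℝ // IsHRPolicy π},
      ⨅ Ps : {Ps : S → ℕ → ProbabilityMeasure (MDPParam S A) // ∀ s t, Ps s t ∈ G s},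
        wDisc γ (π : List (S × A) → S → A → ℝ)
          (Ps : S → ℕ → ProbabilityMeasure (MDPParam S A)) s₁) = vinf s₁ := by
    refine le_antisymm (ciSup_le fun π => (fact2 π.1 π.2).trans (fact1 π.1 π.2)) ?_
    refine le_ciSup_of_le ⟨vinf s₁, ?_⟩ (⟨fun _ s => πstar s, hπbHR⟩ :
      {π : List (S × A) → S → A → ℝ // IsHRPolicy π}) e2.ge
    rintro x ⟨π, rfl⟩
    exact (fact2 π.1 π.2).trans (fact1 π.1 π.2)
  exact ⟨sup_stat.trans sup_non.symm, e1.trans sup_stat.symm, e2.trans sup_non.symm⟩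

end Main

/-- the stationary and non-stationary infinite-horizon distributionally robust
MDPs have the same optimal value, and this common value is attained by any S-robust
strategy in both models. -/
theorem stationary_nonstationary_same_value
    (γ rmax : ℝ) (hγ : 0 < γ) (hγ1 : γ < 1) (hrmax : 0 ≤ rmax)
    (G : S → Set (ProbabilityMeasure (MDPParam S A)))
    (hG : IsGoodAmbiguity rmax G)
    (s₁ : S) (vinf : S → ℝ) (πstar : S → A → ℝ)
    (hπstar : IsSRobustStationary γ G vinf πstar) :
    (⨆ π : {π : List (S × A) → S → A → ℝ // IsHRPolicy π},
        ⨅ Qs : {Qs : S → ProbabilityMeasure (MDPParam S A) // ∀ s, Qs s ∈ G s},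
          wDisc γ (π : List (S × A) → S → A → ℝ)
            (fun s _ => (Qs : S → ProbabilityMeasure (MDPParam S A)) s) s₁)
      = (⨆ π : {π : List (S × A) → S → A → ℝ // IsHRPolicy π},
          ⨅ Ps : {Ps : S → ℕ → ProbabilityMeasure (MDPParam S A) // ∀ s t, Ps s t ∈ G s},
            wDisc γ (π : List (S × A) → S → A → ℝ)
              (Ps : S → ℕ → ProbabilityMeasure (MDPParam S A)) s₁) ∧
    (⨅ Qs : {Qs : S → ProbabilityMeasure (MDPParam S A) // ∀ s, Qs s ∈ G s},
        wDisc γ (fun _ s => πstar s)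
          (fun s _ => (Qs : S → ProbabilityMeasure (MDPParam S A)) s) s₁)
      = (⨆ π : {π : List (S × A) → S → A → ℝ // IsHRPolicy π},
          ⨅ Qs : {Qs : S → ProbabilityMeasure (MDPParam S A) // ∀ s, Qs s ∈ G s},
            wDisc γ (π : List (S × A) → S → A → ℝ)
              (fun s _ => (Qs : S → ProbabilityMeasure (MDPParam S A)) s) s₁) ∧
    (⨅ Ps : {Ps : S → ℕ → ProbabilityMeasure (MDPParam S A) // ∀ s t, Ps s t ∈ G s},
        wDisc γ (fun _ s => πstar s) (Ps : S → ℕ → ProbabilityMeasure (MDPParam S A)) s₁)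
      = (⨆ π : {π : List (S × A) → S → A → ℝ // IsHRPolicy π},
          ⨅ Ps : {Ps : S → ℕ → ProbabilityMeasure (MDPParam S A) // ∀ s t, Ps s t ∈ G s},
            wDisc γ (π : List (S × A) → S → A → ℝ)
              (Ps : S → ℕ → ProbabilityMeasure (MDPParam S A)) s₁) :=
  stationary_nonstationary_same_value' γ rmax hγ hγ1 hrmax G hG s₁ vinf πstar hπstar

end
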